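/- For a mass vector m = (1,…,1,m_k,1,…,1,m_n) with m_k ≠ 1 at position k < n and m_n ≠ 1 at position n, where n is odd, the reflection S ∈ D_n (the permutation i ↦ n−i for i < n, fixing n) satisfies: S·m − m is a vector supported on two coordinates with values ±(m_k − 1), and consequently the quadratic form H(S·m − m) = −2(m_k−1)²/r^α < 0, where r is the distance between the positions k and n−k. -/
import Mathlib


/-- For `n` odd and a mass vector with all masses 1 except `m_k ≠ 1` (at `k < n`) and
`m_n ≠ 1`, the reflection `S : i ↦ n − i` (fixing `n`) yields a vector `v = S·m − m`
supported on coordinates `k` and `n − k` with values `±(m_k − 1)`, and the quadratic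
form satisfies `vᵀHv = −2(m_k − 1)²/r_{k,n−k}^α < 0`. -/
theorem stmt_11 (n k : ℕ) (α : ℝ) (hα : 0 < α) (hodd : Odd n)
    (hk1 : 1 ≤ k) (hkn : k < n)
    (m θ : ℕ → ℝ)
    (hmass : ∀ i ∈ Finset.Icc 1 n, i ≠ k → i ≠ n → m i = 1)
    (hmk : m k ≠ 1) (hmn : m n ≠ 1)
    (hθ0 : 0 < θ 1) (hθmono : StrictMonoOn θ (Set.Icc 1 n)) (hθn : θ n = 2 * Real.pi)
    (H : ℕ → ℕ → ℝ)
    (hH : ∀ i j, H i j = if i = j then 0 else (2 * |Real.sin ((θ i - θ j) / 2)|) ^ (-α))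
    (v : ℕ → ℝ)
    (hv : ∀ i ∈ Finset.Icc 1 n, v i = m (if i = n then n else n - i) - m i) :
    (∀ i ∈ Finset.Icc 1 n, i ≠ k → i ≠ n - k → v i = 0) ∧
    v k = 1 - m k ∧ v (n - k) = m k - 1 ∧
    (∑ i ∈ Finset.Icc 1 n, ∑ j ∈ Finset.Icc 1 n, v i * H i j * v j) =
      -2 * (m k - 1) ^ 2 * (2 * |Real.sin ((θ k - θ (n - k)) / 2)|) ^ (-α) ∧
    (∑ i ∈ Finset.Icc 1 n, ∑ j ∈ Finset.Icc 1 n, v i * H i j * v j) < 0 := by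
  obtain ⟨t, ht⟩ := hodd
  have hkb : k ≠ n - k := by omega
  have hkmem : k ∈ Finset.Icc 1 n := by rw [Finset.mem_Icc]; omega
  have hbmem : n - k ∈ Finset.Icc 1 n := by rw [Finset.mem_Icc]; omega
  have hzero : ∀ i ∈ Finset.Icc 1 n, i ≠ k → i ≠ n - k → v i = 0 := by
    intro i hi hik hib
    rw [hv i hi]
    rcases eq_or_ne i n with rfl | hin
    · simp
    · have hi' := Finset.mem_Icc.mp hi
      rw [if_neg hin, hmass i hi hik hin,
        hmass (n - i) (by rw [Finset.mem_Icc]; omega) (by omega) (by omega)]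
      ring
  have hvk : v k = 1 - m k := by
    rw [hv k hkmem, if_neg (by omega),
      hmass (n - k) hbmem (Ne.symm hkb) (by omega)]
  have hvb : v (n - k) = m k - 1 := by
    rw [hv _ hbmem, if_neg (by omega)]
    have hnnk : n - (n - k) = k := by omega
    rw [hnnk, hmass (n - k) hbmem (Ne.symm hkb) (by omega)]
  -- symmetry of H at (k, n-k)
  have hsym : H (n - k) k = H k (n - k) := by
    rw [hH, hH, if_neg (Ne.symm hkb), if_neg hkb]
    have : θ (n - k) - θ k = -(θ k - θ (n - k)) := by ring
    rw [this, neg_div, Real.sin_neg, abs_neg]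
  have hpair : ({k, n - k} : Finset ℕ) ⊆ Finset.Icc 1 n := by
    intro x hx
    rcases Finset.mem_insert.mp hx with rfl | hx
    · exact hkmem
    · rw [Finset.mem_singleton.mp hx]; exact hbmem
  have hinner : ∀ i, (∑ j ∈ Finset.Icc 1 n, v i * H i j * v j)
      = v i * H i k * v k + v i * H i (n - k) * v (n - k) := by
    intro i
    rw [← Finset.sum_subset hpair (by
      intro x hx hx'
      have h1 : x ≠ k := fun h => hx' (by simp [h])
      have h2 : x ≠ n - k := fun h => hx' (by simp [h])
      rw [hzero x hx h1 h2]; ring)]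
    rw [Finset.sum_pair hkb]
  have houter : (∑ i ∈ Finset.Icc 1 n, ∑ j ∈ Finset.Icc 1 n, v i * H i j * v j)
      = (∑ j ∈ Finset.Icc 1 n, v k * H k j * v j)
        + (∑ j ∈ Finset.Icc 1 n, v (n - k) * H (n - k) j * v j) := by
    rw [← Finset.sum_subset hpair (by
      intro x hx hx'
      have h1 : x ≠ k := fun h => hx' (by simp [h])
      have h2 : x ≠ n - k := fun h => hx' (by simp [h])
      have := hzero x hx h1 h2
      apply Finset.sum_eq_zero
      intro j _
      rw [this]; ring)]
    rw [Finset.sum_pair hkb]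
  have hHkk : H k k = 0 := by rw [hH]; simp
  have hHbb : H (n - k) (n - k) = 0 := by rw [hH]; simp
  have hsum : (∑ i ∈ Finset.Icc 1 n, ∑ j ∈ Finset.Icc 1 n, v i * H i j * v j)
      = -2 * (m k - 1) ^ 2 * (2 * |Real.sin ((θ k - θ (n - k)) / 2)|) ^ (-α) := by
    rw [houter, hinner k, hinner (n - k), hHkk, hHbb, hsym, hvk, hvb,
      hH k (n - k), if_neg hkb]
    ring
  -- positivity of the coefficient
  have hkS : (k : ℕ) ∈ Set.Icc 1 n := ⟨hk1, le_of_lt hkn⟩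
  have hbS : (n - k : ℕ) ∈ Set.Icc 1 n := ⟨by omega, by omega⟩
  have h1S : (1 : ℕ) ∈ Set.Icc 1 n := ⟨le_rfl, by omega⟩
  have hnS : (n : ℕ) ∈ Set.Icc 1 n := ⟨by omega, le_rfl⟩
  have hmono := hθmono.monotoneOn
  have hθk_pos : 0 < θ k := lt_of_lt_of_le hθ0 (hmono h1S hkS hk1)
  have hθb_pos : 0 < θ (n - k) := lt_of_lt_of_le hθ0 (hmono h1S hbS (by omega))
  have hθk_le : θ k ≤ 2 * Real.pi := hθn ▸ hmono hkS hnS (le_of_lt hkn)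
  have hθb_le : θ (n - k) ≤ 2 * Real.pi := hθn ▸ hmono hbS hnS (by omega)
  have hθne : θ k ≠ θ (n - k) := fun h => hkb (hθmono.injOn hkS hbS h)
  have hd1 : -Real.pi < (θ k - θ (n - k)) / 2 := by nlinarith [Real.pi_pos]
  have hd2 : (θ k - θ (n - k)) / 2 < Real.pi := by nlinarith [Real.pi_pos]
  have hsin : Real.sin ((θ k - θ (n - k)) / 2) ≠ 0 := by
    intro h
    have h0 := (Real.sin_eq_zero_iff_of_lt_of_lt hd1 hd2).mp h
    apply hθne
    linarith
  have hrpos : (0 : ℝ) < 2 * |Real.sin ((θ k - θ (n - k)) / 2)| := by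
    have := abs_pos.mpr hsin; linarith
  have hpow : (0 : ℝ) < (2 * |Real.sin ((θ k - θ (n - k)) / 2)|) ^ (-α) :=
    Real.rpow_pos_of_pos hrpos _
  have hsq : (0 : ℝ) < (m k - 1) ^ 2 := by
    have : m k - 1 ≠ 0 := fun h => hmk (by linarith)
    positivity
  refine ⟨hzero, hvk, hvb, hsum, ?_⟩
  rw [hsum]
  nlinarith [mul_pos hsq hpow]
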